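/- The function x ↦ Real.exp x * ∫ t in Set.Ioi x, Real.exp (−t) / t is strictly decreasing on (0, ∞) (StrictAntiOn on Set.Ioi 0). Equivalently, the long-term average rate ρ ↦ Real.exp (1/ρ) * ∫ t in Set.Ioi (1/ρ), Real.exp (−t) / t is strictly increasing in the SINR ρ on (0, ∞). -/

import Mathlib

open MeasureTheory

lemma myIntegrableOn {x : ℝ} (hx : 0 < x) :
    IntegrableOn (fun s : ℝ => Real.exp (-s) / (s + x)) (Set.Ioi 0) := by
  have hg : IntegrableOn (fun s : ℝ => Real.exp (-s) / x) (Set.Ioi 0) := by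
    have := (exp_neg_integrableOn_Ioi 0 (one_pos)).div_const x
    simpa [IntegrableOn] using this
  refine Integrable.mono' hg ?_ ?_
  · refine ContinuousOn.aestronglyMeasurable ?_ measurableSet_Ioi
    refine ContinuousOn.div (Real.continuous_exp.comp continuous_neg).continuousOn
      (continuous_id.add continuous_const).continuousOn ?_
    intro s hs
    have : (0:ℝ) < s + x := by
      have := Set.mem_Ioi.mp hs; linarith
    exact this.ne'
  · filter_upwards [ae_restrict_mem measurableSet_Ioi] with s hs
    have hs0 : (0:ℝ) < s := hs
    have hsx : (0:ℝ) < s + x := by linarith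
    rw [Real.norm_eq_abs, abs_of_nonneg (by positivity)]
    exact div_le_div_of_nonneg_left (Real.exp_pos _).le hx (by linarith)

lemma myKey (x : ℝ) :
    Real.exp x * ∫ t in Set.Ioi x, Real.exp (-t) / t
      = ∫ s in Set.Ioi (0:ℝ), Real.exp (-s) / (s + x) := by
  have hmap : Measure.map (fun s : ℝ => s + x) volume = volume :=
    map_add_right_eq_self volume x
  have hpre : (fun s : ℝ => s + x) ⁻¹' Set.Ioi x = Set.Ioi 0 := by
    ext s; simp
  have hmeas : AEStronglyMeasurable (fun t : ℝ => Real.exp (-t) / t)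
      (Measure.map (fun s : ℝ => s + x) volume) := by
    refine Measurable.aestronglyMeasurable ?_
    exact (Real.measurable_exp.comp measurable_neg).div measurable_id
  have h1 : (∫ t in Set.Ioi x, Real.exp (-t) / t)
      = ∫ s in Set.Ioi (0:ℝ), Real.exp (-(s + x)) / (s + x) := by
    conv_lhs => rw [← hmap]
    rw [setIntegral_map measurableSet_Ioi hmeas (measurable_add_const x).aemeasurable, hpre]
  rw [h1, ← integral_const_mul]
  refine setIntegral_congr_fun measurableSet_Ioi fun s _ => ?_
  have h2 : Real.exp x * Real.exp (-(s + x)) = Real.exp (-s) := by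
    rw [← Real.exp_add]; congr 1; ring
  rw [← mul_div_assoc, h2]

lemma myAnti :
    StrictAntiOn (fun x : ℝ => Real.exp x * ∫ t in Set.Ioi x, Real.exp (-t) / t)
      (Set.Ioi (0 : ℝ)) := by
  intro x hx y hy hxy
  have hx0 : (0:ℝ) < x := hx
  have hy0 : (0:ℝ) < y := hy
  simp only
  rw [myKey x, myKey y, ← sub_pos, ← integral_sub (myIntegrableOn hx0) (myIntegrableOn hy0)]
  set h := fun s : ℝ => Real.exp (-s) / (s + x) - Real.exp (-s) / (s + y) with hh
  have hpos : ∀ s ∈ Set.Ioi (0:ℝ), 0 < h s := by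
    intro s hs
    have hs0 : (0:ℝ) < s := hs
    have h1 : (0:ℝ) < s + x := by linarith
    have h2 : s + x < s + y := by linarith
    exact sub_pos.mpr (div_lt_div_of_pos_left (Real.exp_pos _) h1 h2)
  have hint : IntegrableOn h (Set.Ioi 0) := (myIntegrableOn hx0).sub (myIntegrableOn hy0)
  have hae : 0 ≤ᵐ[volume.restrict (Set.Ioi (0:ℝ))] h := by
    filter_upwards [ae_restrict_mem measurableSet_Ioi] with s hs
    exact (hpos s hs).le
  rw [setIntegral_pos_iff_support_of_nonneg_ae hae hint]
  have hsub : Set.Ioi (0:ℝ) ⊆ Function.support h ∩ Set.Ioi 0 :=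
    fun s hs => ⟨(hpos s hs).ne', hs⟩
  calc (0:ENNReal) < volume (Set.Ioi (0:ℝ)) := by simp [Real.volume_Ioi]
    _ ≤ volume (Function.support h ∩ Set.Ioi 0) := measure_mono hsub

theorem expE1_strictAnti_and_rate_strictMono :
    StrictAntiOn (fun x : ℝ => Real.exp x * ∫ t in Set.Ioi x, Real.exp (-t) / t)
      (Set.Ioi (0 : ℝ)) ∧
    StrictMonoOn (fun ρ : ℝ => Real.exp (1 / ρ) * ∫ t in Set.Ioi (1 / ρ), Real.exp (-t) / t)
      (Set.Ioi (0 : ℝ)) := by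
  refine ⟨myAnti, ?_⟩
  intro ρ hρ σ hσ hρσ
  have hρ0 : (0:ℝ) < ρ := hρ
  have hσ0 : (0:ℝ) < σ := hσ
  exact myAnti (Set.mem_Ioi.mpr (by positivity)) (Set.mem_Ioi.mpr (by positivity))
    (by exact one_div_lt_one_div_of_lt hρ0 hρσ)
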